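/- (Lemma 3, k-step-ahead forecasts.) If S has a linear equivalent, then for every i ≥ 1, E[δ̂_i | 𝒢_{i−1}] = δ_i almost surely, where δ_i = S_w(𝐩_i, r_i) − S_w(𝐪_i, r_i) and δ̂_i = S_w(𝐩_i, y_i) − S_w(𝐪_i, y_i). -/

import Mathlib

open MeasureTheory Set

/-- A scoring rule `S` on `[0,1] × [0,1]` *has a linear equivalent* if there is a bounded
measurable `S̃ : [0,1] × [0,1] → ℝ` which is affine in its second argument and such that
`S(p, r) - S̃(p, r)` does not depend on `p`. -/
def HasLinearEquivalent (S : ℝ → ℝ → ℝ) : Prop :=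
  ∃ St : ℝ → ℝ → ℝ,
    Measurable (Function.uncurry St) ∧
    (∃ C : ℝ, ∀ p ∈ Icc (0:ℝ) 1, ∀ r ∈ Icc (0:ℝ) 1, |St p r| ≤ C) ∧
    (∀ p ∈ Icc (0:ℝ) 1, ∃ a b : ℝ, ∀ r ∈ Icc (0:ℝ) 1, St p r = a + b * r) ∧
    (∀ p ∈ Icc (0:ℝ) 1, ∀ p' ∈ Icc (0:ℝ) 1, ∀ r ∈ Icc (0:ℝ) 1,
      S p r - St p r = S p' r - St p' r)

/-- **Lemma 3 (k-step-ahead forecasts).**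
Fix `K ≥ 1` and weights `w ∈ [0,1]^K` summing to one, and let the `k`-step-ahead forecasts
`p_t^{(k)}, q_t^{(k)}` be `[0,1]`-valued and `𝒢_{t−k}`-measurable, with the weighted score
`S_w(𝐩_t, r) = Σ_{k=1}^K w_k S(p_t^{(k)}, r)`.  If `S` has a linear equivalent, then for
every `t ≥ 1`, `E[δ̂_t | 𝒢_{t−1}] = δ_t` almost surely, where
`δ_t = S_w(𝐩_t, r_t) − S_w(𝐪_t, r_t)` and `δ̂_t = S_w(𝐩_t, y_t) − S_w(𝐪_t, y_t)`. -/
theorem kstep_score_differential_conditionally_unbiased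
    {Ω : Type*} {m0 : MeasurableSpace Ω} {P : Measure Ω} [IsProbabilityMeasure P]
    (𝒢 : Filtration ℕ m0)
    (S : ℝ → ℝ → ℝ)
    (hSmeas : Measurable (Function.uncurry S))
    (hSbdd : ∃ C : ℝ, ∀ p ∈ Icc (0:ℝ) 1, ∀ r ∈ Icc (0:ℝ) 1, |S p r| ≤ C)
    (hlin : HasLinearEquivalent S)
    (K : ℕ) (hK : 1 ≤ K)
    (w : ℕ → ℝ)
    (hw_mem : ∀ k ∈ Finset.Icc 1 K, w k ∈ Icc (0:ℝ) 1)
    (hw_sum : ∑ k ∈ Finset.Icc 1 K, w k = 1)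
    (p q : ℕ → ℕ → Ω → ℝ) (r y : ℕ → Ω → ℝ)
    (hp_pred : ∀ t : ℕ, 1 ≤ t → ∀ k ∈ Finset.Icc 1 K, Measurable[𝒢 (t - k)] (p t k))
    (hq_pred : ∀ t : ℕ, 1 ≤ t → ∀ k ∈ Finset.Icc 1 K, Measurable[𝒢 (t - k)] (q t k))
    (hr_pred : ∀ t : ℕ, 1 ≤ t → Measurable[𝒢 (t - 1)] (r t))
    (hp_mem : ∀ t k ω, p t k ω ∈ Icc (0:ℝ) 1)
    (hq_mem : ∀ t k ω, q t k ω ∈ Icc (0:ℝ) 1)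
    (hr_mem : ∀ t ω, r t ω ∈ Icc (0:ℝ) 1)
    (hy_adapted : ∀ t : ℕ, 1 ≤ t → Measurable[𝒢 t] (y t))
    (hy_mem : ∀ t ω, y t ω = 0 ∨ y t ω = 1)
    (hy_cond : ∀ t : ℕ, 1 ≤ t → P[y t | 𝒢 (t - 1)] =ᵐ[P] r t) :
    ∀ t : ℕ, 1 ≤ t →
      P[(fun ω => (∑ k ∈ Finset.Icc 1 K, w k * S (p t k ω) (y t ω))
            - ∑ k ∈ Finset.Icc 1 K, w k * S (q t k ω) (y t ω)) | 𝒢 (t - 1)]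
        =ᵐ[P] (fun ω => (∑ k ∈ Finset.Icc 1 K, w k * S (p t k ω) (r t ω))
            - ∑ k ∈ Finset.Icc 1 K, w k * S (q t k ω) (r t ω)) := by
  obtain ⟨St, hStMeas, ⟨Cs, hStBdd⟩, hStAff, hStDiff⟩ := hlin
  intro t ht
  have hmle : 𝒢 (t - 1) ≤ m0 := 𝒢.le (t - 1)
  have h0 : (0:ℝ) ∈ Icc (0:ℝ) 1 := by norm_num
  have h1 : (1:ℝ) ∈ Icc (0:ℝ) 1 := by norm_num
  have hCs : 0 ≤ Cs := le_trans (abs_nonneg _) (hStBdd 0 h0 0 h0)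
  -- linear representation of St on [0,1]
  have hSt_rep : ∀ u ∈ Icc (0:ℝ) 1, ∀ x ∈ Icc (0:ℝ) 1,
      St u x = St u 0 + (St u 1 - St u 0) * x := by
    intro u hu x hx
    obtain ⟨a, b, hab⟩ := hStAff u hu
    rw [hab x hx, hab 0 h0, hab 1 h1]; ring
  -- pointwise key identity
  have hpoint : ∀ u ∈ Icc (0:ℝ) 1, ∀ v ∈ Icc (0:ℝ) 1, ∀ x ∈ Icc (0:ℝ) 1,
      S u x - S v x = (St u 0 - St v 0)
        + ((St u 1 - St u 0) - (St v 1 - St v 0)) * x := by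
    intro u hu v hv x hx
    have hd := hStDiff u hu v hv x hx
    have h1' := hSt_rep u hu x hx
    have h2' := hSt_rep v hv x hx
    nlinarith [hd, h1', h2']
  set G : Ω → ℝ := fun ω => ∑ k ∈ Finset.Icc 1 K,
    w k * (St (p t k ω) 0 - St (q t k ω) 0) with hGdef
  set H : Ω → ℝ := fun ω => ∑ k ∈ Finset.Icc 1 K,
    w k * ((St (p t k ω) 1 - St (p t k ω) 0) - (St (q t k ω) 1 - St (q t k ω) 0)) with hHdef
  have hy01 : ∀ ω, y t ω ∈ Icc (0:ℝ) 1 := by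
    intro ω; rcases hy_mem t ω with h | h <;> rw [h] <;> exact ⟨by norm_num, by norm_num⟩
  have key : ∀ x : ℝ, x ∈ Icc (0:ℝ) 1 → ∀ ω : Ω,
      (∑ k ∈ Finset.Icc 1 K, w k * S (p t k ω) x)
        - ∑ k ∈ Finset.Icc 1 K, w k * S (q t k ω) x
      = G ω + H ω * x := by
    intro x hx ω
    rw [hGdef, hHdef]
    simp only
    rw [Finset.sum_mul, ← Finset.sum_add_distrib, ← Finset.sum_sub_distrib]
    refine Finset.sum_congr rfl fun k hk => ?_
    have h := hpoint (p t k ω) (hp_mem t k ω) (q t k ω) (hq_mem t k ω) x hx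
    rw [← mul_sub, h]; ring
  -- measurability
  have hmono : ∀ k ∈ Finset.Icc 1 K, 𝒢 (t - k) ≤ 𝒢 (t - 1) := by
    intro k hk
    exact 𝒢.mono (Nat.sub_le_sub_left (Finset.mem_Icc.mp hk).1 t)
  have hSt_comp : ∀ (f : Ω → ℝ), Measurable[𝒢 (t-1)] f → ∀ c : ℝ,
      Measurable[𝒢 (t-1)] (fun ω => St (f ω) c) := fun f hf c =>
    hStMeas.comp (hf.prodMk measurable_const)
  have hp1 : ∀ k ∈ Finset.Icc 1 K, Measurable[𝒢 (t-1)] (p t k) := fun k hk =>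
    (hp_pred t ht k hk).mono (hmono k hk) le_rfl
  have hq1 : ∀ k ∈ Finset.Icc 1 K, Measurable[𝒢 (t-1)] (q t k) := fun k hk =>
    (hq_pred t ht k hk).mono (hmono k hk) le_rfl
  have hG_meas : Measurable[𝒢 (t-1)] G := by
    refine Finset.measurable_sum _ fun k hk => measurable_const.mul ?_
    exact (hSt_comp _ (hp1 k hk) 0).sub (hSt_comp _ (hq1 k hk) 0)
  have hH_meas : Measurable[𝒢 (t-1)] H := by
    refine Finset.measurable_sum _ fun k hk => measurable_const.mul ?_
    exact ((hSt_comp _ (hp1 k hk) 1).sub (hSt_comp _ (hp1 k hk) 0)).sub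
      ((hSt_comp _ (hq1 k hk) 1).sub (hSt_comp _ (hq1 k hk) 0))
  -- bounds
  have hGbd : ∀ ω, |G ω| ≤ 2 * Cs := by
    intro ω
    calc |G ω| ≤ ∑ k ∈ Finset.Icc 1 K, |w k * (St (p t k ω) 0 - St (q t k ω) 0)| :=
          Finset.abs_sum_le_sum_abs _ _
      _ ≤ ∑ k ∈ Finset.Icc 1 K, w k * (2 * Cs) := by
          refine Finset.sum_le_sum fun k hk => ?_
          rw [abs_mul, abs_of_nonneg (hw_mem k hk).1]
          refine mul_le_mul_of_nonneg_left ?_ (hw_mem k hk).1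
          calc |St (p t k ω) 0 - St (q t k ω) 0| ≤ |St (p t k ω) 0| + |St (q t k ω) 0| :=
                abs_sub _ _
            _ ≤ Cs + Cs := add_le_add (hStBdd _ (hp_mem t k ω) 0 h0)
                (hStBdd _ (hq_mem t k ω) 0 h0)
            _ = 2 * Cs := by ring
      _ = 2 * Cs := by rw [← Finset.sum_mul, hw_sum, one_mul]
  have hHbd : ∀ ω, |H ω| ≤ 4 * Cs := by
    intro ω
    calc |H ω| ≤ ∑ k ∈ Finset.Icc 1 K,
          |w k * ((St (p t k ω) 1 - St (p t k ω) 0) - (St (q t k ω) 1 - St (q t k ω) 0))| :=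
          Finset.abs_sum_le_sum_abs _ _
      _ ≤ ∑ k ∈ Finset.Icc 1 K, w k * (4 * Cs) := by
          refine Finset.sum_le_sum fun k hk => ?_
          rw [abs_mul, abs_of_nonneg (hw_mem k hk).1]
          refine mul_le_mul_of_nonneg_left ?_ (hw_mem k hk).1
          have b1 := hStBdd _ (hp_mem t k ω) 1 h1
          have b2 := hStBdd _ (hp_mem t k ω) 0 h0
          have b3 := hStBdd _ (hq_mem t k ω) 1 h1
          have b4 := hStBdd _ (hq_mem t k ω) 0 h0
          have := abs_le.mp b1; have := abs_le.mp b2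
          have := abs_le.mp b3; have := abs_le.mp b4
          rw [abs_le]; constructor <;> nlinarith [abs_le.mp b1, abs_le.mp b2, abs_le.mp b3, abs_le.mp b4]
      _ = 4 * Cs := by rw [← Finset.sum_mul, hw_sum, one_mul]
  -- integrability
  have hy_meas : Measurable (y t) := (hy_adapted t ht).mono (𝒢.le t) le_rfl
  have hy_bd : ∀ ω, |y t ω| ≤ 1 := by
    intro ω; rcases hy_mem t ω with h | h <;> rw [h] <;> norm_num
  have hy_int : Integrable (y t) P :=
    ⟨hy_meas.aestronglyMeasurable, HasFiniteIntegral.of_bounded (C := 1) (ae_of_all _ hy_bd)⟩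
  have hG_int : Integrable G P :=
    ⟨((hG_meas.mono hmle le_rfl).aestronglyMeasurable),
      HasFiniteIntegral.of_bounded (C := 2 * Cs) (ae_of_all _ hGbd)⟩
  have hHy_int : Integrable (H * y t) P := by
    refine ⟨((hH_meas.mono hmle le_rfl).mul hy_meas).aestronglyMeasurable,
      HasFiniteIntegral.of_bounded (C := 4 * Cs) (ae_of_all _ fun ω => ?_)⟩
    have : ‖H ω * y t ω‖ = |H ω| * |y t ω| := abs_mul _ _
    rw [Pi.mul_apply]
    calc ‖H ω * y t ω‖ = |H ω| * |y t ω| := abs_mul _ _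
      _ ≤ (4 * Cs) * 1 := mul_le_mul (hHbd ω) (hy_bd ω) (abs_nonneg _) (by linarith)
      _ = 4 * Cs := mul_one _
  -- rewrite both sides
  have e1 : (fun ω => (∑ k ∈ Finset.Icc 1 K, w k * S (p t k ω) (y t ω))
        - ∑ k ∈ Finset.Icc 1 K, w k * S (q t k ω) (y t ω)) = G + H * y t :=
    funext fun ω => key (y t ω) (hy01 ω) ω
  have e2 : (fun ω => (∑ k ∈ Finset.Icc 1 K, w k * S (p t k ω) (r t ω))
        - ∑ k ∈ Finset.Icc 1 K, w k * S (q t k ω) (r t ω))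
      = fun ω => G ω + H ω * r t ω :=
    funext fun ω => key (r t ω) (hr_mem t ω) ω
  rw [e1, e2]
  calc P[G + H * y t | 𝒢 (t-1)]
      =ᵐ[P] P[G | 𝒢 (t-1)] + P[H * y t | 𝒢 (t-1)] := condExp_add hG_int hHy_int _
    _ =ᵐ[P] G + H * P[y t | 𝒢 (t-1)] := by
        rw [condExp_of_stronglyMeasurable hmle hG_meas.stronglyMeasurable hG_int]
        exact Filter.EventuallyEq.add (Filter.EventuallyEq.refl _ _)
          (condExp_stronglyMeasurable_mul_of_bound hmle hH_meas.stronglyMeasurable hy_int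
            (4 * Cs) (ae_of_all _ hHbd))
    _ =ᵐ[P] fun ω => G ω + H ω * r t ω := by
        filter_upwards [hy_cond t ht] with ω hω
        simp only [Pi.add_apply, Pi.mul_apply, hω]
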